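/- Suppose r and k are coprime, 1 ≤ k < r/3, and {0, k} ⊆ A ⊆ [0, k] ⊆ ℤ/rℤ. Then for every w ∈ ℤ/rℤ there exists S₀ ⊆ ℤ/rℤ with |S₀| ≥ 2 and w + k̄ ∈ S₀ such that (w, w + k̄, S₀) is a pointed minimal cover. -/

import Mathlib

/-- The translate `A + w = {a + w : a ∈ A}` in `ℤ/rℤ`. -/
def shiftA (r : ℕ) (A : Set (ZMod r)) (w : ZMod r) : Set (ZMod r) :=
  (· + w) '' A

/-- A pointed minimal cover `(w₀, w₁, S₀)`. -/
def PointedMinimalCover (r : ℕ) (A : Set (ZMod r)) (w₀ w₁ : ZMod r)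
    (S₀ : Set (ZMod r)) : Prop :=
  S₀.Nontrivial ∧ w₁ ∈ S₀ ∧
    (∀ S₁ ⊆ S₀, (shiftA r A w₀ ⊆ ⋃ s ∈ S₁, shiftA r A s) ↔ S₁ = S₀) ∧
    ¬ shiftA r A w₁ ⊆ ⋃ w ∈ (S₀ \ {w₁}) ∪ {w₀}, shiftA r A w

theorem stmt9 (r k : ℕ) (hco : Nat.Coprime r k) (hk : 1 ≤ k) (hr : 3 * k < r)
    (A : Set (ZMod r)) (h0 : (0 : ZMod r) ∈ A) (hkA : (k : ZMod r) ∈ A)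
    (hAsub : A ⊆ (fun i : ℕ => (i : ZMod r)) '' {i : ℕ | i ≤ k}) :
    ∀ w : ZMod r, ∃ S₀ : Set (ZMod r), S₀.Nontrivial ∧ w + (k : ZMod r) ∈ S₀ ∧
      PointedMinimalCover r A w (w + (k : ZMod r)) S₀ := by
  classical
  haveI : NeZero r := ⟨by omega⟩
  intro w
  -- cast injectivity below r
  have castInj : ∀ x y : ℕ, x < r → y < r → (x : ZMod r) = (y : ZMod r) → x = y := by
    intro x y hx hy h
    have h2 := congrArg ZMod.val h
    rwa [ZMod.val_cast_of_lt hx, ZMod.val_cast_of_lt hy] at h2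
  -- the set of natural representatives of A
  set B : Finset ℕ := (Finset.range (k+1)).filter (fun i => (i : ZMod r) ∈ A) with hB
  have hBk : ∀ b ∈ B, b ≤ k := by
    intro b hb; rw [hB, Finset.mem_filter, Finset.mem_range] at hb; omega
  have hBA : ∀ b ∈ B, (b : ZMod r) ∈ A := by
    intro b hb; rw [hB, Finset.mem_filter] at hb; exact hb.2
  have hkB : k ∈ B := by
    rw [hB, Finset.mem_filter, Finset.mem_range]; exact ⟨by omega, hkA⟩
  have h0B : 0 ∈ B := by
    rw [hB, Finset.mem_filter, Finset.mem_range]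
    exact ⟨by omega, by simpa using h0⟩
  have memShift : ∀ x s : ZMod r, x ∈ shiftA r A s ↔ ∃ b ∈ B, x = (b : ZMod r) + s := by
    intro x s
    constructor
    · rintro ⟨v, hv, rfl⟩
      obtain ⟨i, hi, rfl⟩ := hAsub hv
      exact ⟨i, by rw [hB, Finset.mem_filter, Finset.mem_range]; exact ⟨Nat.lt_succ_of_le hi, hv⟩, rfl⟩
    · rintro ⟨b, hb, rfl⟩
      exact ⟨b, hBA b hb, rfl⟩
  -- key membership computation for shifts of the form w + a - k
  have lemA : ∀ a' a : ℕ, a' ≤ 2*k → a ≤ k →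
      ((w + (a' : ZMod r) ∈ shiftA r A (w + (a : ZMod r) - (k : ZMod r))) ↔
        ∃ b ∈ B, a' + k = b + a) := by
    intro a' a ha' ha
    rw [memShift]
    constructor
    · rintro ⟨b, hb, heq⟩
      refine ⟨b, hb, ?_⟩
      have hbk := hBk b hb
      have hcast : ((a' + k : ℕ) : ZMod r) = ((b + a : ℕ) : ZMod r) := by
        push_cast
        linear_combination heq
      exact castInj _ _ (by omega) (by omega) hcast
    · rintro ⟨b, hb, hnat⟩
      refine ⟨b, hb, ?_⟩
      have hcast : ((a' + k : ℕ) : ZMod r) = ((b + a : ℕ) : ZMod r) := by rw [hnat]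
      push_cast at hcast
      linear_combination hcast
  -- membership computation for the shift w + k
  have lemK : ∀ a' : ℕ, a' ≤ 2*k →
      ((w + (a' : ZMod r) ∈ shiftA r A (w + (k : ZMod r))) ↔ ∃ b ∈ B, a' = b + k) := by
    intro a' ha'
    rw [memShift]
    constructor
    · rintro ⟨b, hb, heq⟩
      refine ⟨b, hb, ?_⟩
      have hbk := hBk b hb
      have hcast : ((a' : ℕ) : ZMod r) = ((b + k : ℕ) : ZMod r) := by
        push_cast
        linear_combination heq
      exact castInj _ _ (by omega) (by omega) hcast
    · rintro ⟨b, hb, hnat⟩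
      refine ⟨b, hb, ?_⟩
      have hcast : ((a' : ℕ) : ZMod r) = ((b + k : ℕ) : ZMod r) := by rw [hnat]
      push_cast at hcast
      linear_combination hcast
  -- membership computation for the shift w
  have lemW : ∀ a' : ℕ, a' ≤ 2*k →
      ((w + (a' : ZMod r) ∈ shiftA r A w) ↔ ∃ b ∈ B, a' = b) := by
    intro a' ha'
    rw [memShift]
    constructor
    · rintro ⟨b, hb, heq⟩
      refine ⟨b, hb, ?_⟩
      have hbk := hBk b hb
      have hcast : ((a' : ℕ) : ZMod r) = ((b : ℕ) : ZMod r) := by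
        push_cast
        linear_combination heq
      exact castInj _ _ (by omega) (by omega) hcast
    · rintro ⟨b, hb, hnat⟩
      exact ⟨b, hb, by rw [hnat]; ring⟩
  -- the points to cover (besides k)
  set P : Finset ℕ := B.erase k with hP
  have hPmem : ∀ a ∈ P, a ∈ B ∧ a ≠ k := by
    intro a ha; rw [hP, Finset.mem_erase] at ha; exact ⟨ha.2, ha.1⟩
  have h0P : 0 ∈ P := by rw [hP, Finset.mem_erase]; exact ⟨by omega, h0B⟩
  -- the family of covering index sets
  set 𝒞 : Finset (Finset ℕ) :=
    P.powerset.filter (fun I => ∀ a' ∈ P, ∃ a ∈ I, ∃ b ∈ B, a' + k = b + a) with h𝒞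
  have hPC : P ∈ 𝒞 := by
    rw [h𝒞, Finset.mem_filter, Finset.mem_powerset]
    refine ⟨le_refl _, ?_⟩
    intro a' ha'
    exact ⟨a', ha', k, hkB, by omega⟩
  obtain ⟨I, hIC, hImin⟩ : ∃ I ∈ 𝒞, ∀ x ∈ 𝒞, ¬ x < I := by
    obtain ⟨I, hI⟩ := Finset.exists_minimal (s := 𝒞) ⟨P, hPC⟩
    exact ⟨I, hI.1, fun x hx hlt => lt_irrefl _ (lt_of_lt_of_le hlt (hI.2 hx hlt.le))⟩
  rw [h𝒞, Finset.mem_filter, Finset.mem_powerset] at hIC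
  obtain ⟨hIP, hIcov⟩ := hIC
  -- essentiality of each element of I
  have hess : ∀ a ∈ I, ∃ a' ∈ P, ∀ c ∈ I.erase a, ¬ ∃ b ∈ B, a' + k = b + c := by
    intro a ha
    by_contra hcon
    push_neg at hcon
    have hmem : I.erase a ∈ 𝒞 := by
      rw [h𝒞, Finset.mem_filter, Finset.mem_powerset]
      refine ⟨(Finset.erase_subset _ _).trans hIP, ?_⟩
      intro a' ha'
      obtain ⟨c, hc, b, hb, heq⟩ := hcon a' ha'
      exact ⟨c, hc, b, hb, heq⟩
    exact hImin _ hmem (Finset.erase_ssubset ha)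
  -- I is nonempty
  obtain ⟨a₀, ha₀I, _⟩ := hIcov 0 h0P
  -- the cover
  set f : ℕ → ZMod r := fun a => w + (a : ZMod r) - (k : ZMod r) with hf
  set S₀ : Set (ZMod r) := insert (w + (k : ZMod r)) (f '' (I : Set ℕ)) with hS₀
  have hfbound : ∀ a ∈ I, a ≤ k ∧ a ≠ k := by
    intro a ha
    obtain ⟨haB, hane⟩ := hPmem a (hIP ha)
    exact ⟨hBk a haB, hane⟩
  have hfne : ∀ a ∈ I, f a ≠ w + (k : ZMod r) := by
    intro a ha hcon
    obtain ⟨hak, hane⟩ := hfbound a ha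
    rw [hf] at hcon
    have hcast : ((a : ℕ) : ZMod r) = ((2*k : ℕ) : ZMod r) := by
      push_cast
      linear_combination hcon
    have := castInj _ _ (by omega) (by omega) hcast
    omega
  have hfinj : ∀ a ∈ I, ∀ c ∈ I, f a = f c → a = c := by
    intro a ha c hc hcon
    obtain ⟨hak, -⟩ := hfbound a ha
    obtain ⟨hck, -⟩ := hfbound c hc
    rw [hf] at hcon
    have hcast : ((a : ℕ) : ZMod r) = ((c : ℕ) : ZMod r) := by
      linear_combination hcon
    exact castInj _ _ (by omega) (by omega) hcast
  have hwk_mem : w + (k : ZMod r) ∈ S₀ := Set.mem_insert _ _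
  have hnt : S₀.Nontrivial := by
    refine ⟨f a₀, ?_, w + (k : ZMod r), hwk_mem, hfne a₀ ha₀I⟩
    exact Set.mem_insert_of_mem _ ⟨a₀, ha₀I, rfl⟩
  -- full coverage
  have hcover : shiftA r A w ⊆ ⋃ s ∈ S₀, shiftA r A s := by
    intro x hx
    rw [memShift] at hx
    obtain ⟨a', ha'B, rfl⟩ := hx
    rw [add_comm]
    have ha'k := hBk a' ha'B
    by_cases hcase : a' = k
    · subst hcase
      refine Set.mem_biUnion hwk_mem ?_
      rw [lemK a' (by omega)]
      exact ⟨0, h0B, by omega⟩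
    · have ha'P : a' ∈ P := by rw [hP, Finset.mem_erase]; exact ⟨hcase, ha'B⟩
      obtain ⟨a, haI, b, hb, heq⟩ := hIcov a' ha'P
      refine Set.mem_biUnion (Set.mem_insert_of_mem _ ⟨a, haI, rfl⟩) ?_
      rw [hf, lemA a' a (by omega) (hfbound a haI).1]
      exact ⟨b, hb, heq⟩
  -- essentiality of each element of S₀
  have hessS : ∀ s ∈ S₀, ¬ shiftA r A w ⊆ ⋃ t ∈ S₀ \ {s}, shiftA r A t := by
    intro s hs hcon
    rw [hS₀, Set.mem_insert_iff] at hs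
    rcases hs with hs | ⟨a, haI, rfl⟩
    · -- s = w + k : the point w + k is then uncovered
      subst hs
      have hpt : w + (k : ZMod r) ∈ shiftA r A w := by
        rw [lemW k (by omega)]
        exact ⟨k, hkB, rfl⟩
      obtain ⟨t, ht, hxt⟩ := Set.mem_iUnion₂.mp (hcon hpt)
      obtain ⟨htS, htne⟩ := ht
      rw [hS₀, Set.mem_insert_iff] at htS
      rcases htS with rfl | ⟨c, hcI, rfl⟩
      · exact htne rfl
      · obtain ⟨hck, hcne⟩ := hfbound c hcI
        rw [hf, show w + (k:ZMod r) = w + ((k:ℕ):ZMod r) by norm_cast,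
          lemA k c (by omega) hck] at hxt
        obtain ⟨b, hb, heq⟩ := hxt
        have hbk := hBk b hb
        omega
    · -- s = f a : some point a' is then uncovered
      obtain ⟨a', ha'P, hnc⟩ := hess a haI
      obtain ⟨ha'B, ha'ne⟩ := hPmem a' ha'P
      have ha'k := hBk a' ha'B
      have hpt : w + (a' : ZMod r) ∈ shiftA r A w := by
        rw [lemW a' (by omega)]
        exact ⟨a', ha'B, rfl⟩
      obtain ⟨t, ht, hxt⟩ := Set.mem_iUnion₂.mp (hcon hpt)
      obtain ⟨htS, htne⟩ := ht
      rw [hS₀, Set.mem_insert_iff] at htS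
      rcases htS with rfl | ⟨c, hcI, rfl⟩
      · rw [lemK a' (by omega)] at hxt
        obtain ⟨b, hb, heq⟩ := hxt
        omega
      · have hca : c ≠ a := by
          intro hcon2; subst hcon2; exact htne rfl
        rw [hf, lemA a' c (by omega) (hfbound c hcI).1] at hxt
        exact hnc c (Finset.mem_erase.mpr ⟨hca, hcI⟩) hxt
  refine ⟨S₀, hnt, hwk_mem, hnt, hwk_mem, ?_, ?_⟩
  · -- minimal cover condition
    intro S₁ hS₁
    constructor
    · intro hcov1
      by_contra hne
      have : ∃ s ∈ S₀, s ∉ S₁ := by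
        by_contra hcon
        push_neg at hcon
        exact hne (le_antisymm hS₁ hcon)
      obtain ⟨s, hsS₀, hsn⟩ := this
      refine hessS s hsS₀ (hcov1.trans ?_)
      apply Set.iUnion₂_subset
      intro t ht
      apply Set.subset_biUnion_of_mem
      exact ⟨hS₁ ht, fun hteq => hsn (hteq ▸ ht)⟩
    · rintro rfl
      exact hcover
  · -- irreducibility : the point w + 2k is not covered
    intro hcon
    have hpt : w + ((2*k : ℕ) : ZMod r) ∈ shiftA r A (w + (k : ZMod r)) := by
      refine ⟨(k : ZMod r), hkA, ?_⟩
      push_cast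
      ring
    obtain ⟨t, ht, hxt⟩ := Set.mem_iUnion₂.mp (hcon hpt)
    rcases ht with ⟨htS, htne⟩ | htw
    · rw [hS₀, Set.mem_insert_iff] at htS
      rcases htS with rfl | ⟨c, hcI, rfl⟩
      · exact htne rfl
      · obtain ⟨hck, hcne⟩ := hfbound c hcI
        rw [hf, lemA (2*k) c (by omega) hck] at hxt
        obtain ⟨b, hb, heq⟩ := hxt
        have hbk := hBk b hb
        omega
    · rw [Set.mem_singleton_iff] at htw
      subst htw
      rw [lemW (2*k) (by omega)] at hxt
      obtain ⟨b, hb, heq⟩ := hxt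
      have hbk := hBk b hb
      omega
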